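/- Let $(X,\mu)$ be a measure space and $0<p<1$. For any countable family of nonnegative measurable functions $(g_j)_j$ one has $\|\sum_j g_j\|_{L^{p,\infty}}^p \le 2^p\big(1+\frac{1}{1-p}\big)\sum_j \|g_j\|_{L^{p,\infty}}^p$. -/

import Mathlib

open MeasureTheory ENNReal Set

/-- The weak `L^p` quasinorm `‖g‖_{L^{p,∞}} = sup_{t>0} t · μ{x : g(x) > t}^{1/p}`
for an `ℝ≥0∞`-valued function. -/
noncomputable def weakLpNorm {X : Type*} [MeasurableSpace X] (μ : Measure X) (p : ℝ)
    (g : X → ℝ≥0∞) : ℝ≥0∞ :=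
  ⨆ (t : ℝ) (_ : 0 < t), ENNReal.ofReal t * μ {x | ENNReal.ofReal t < g x} ^ (1 / p)

/-- Quasi-triangle inequality for weak `L^p`, `0 < p < 1`:
`‖∑ⱼ gⱼ‖_{p,∞}^p ≤ 2^p (1 + 1/(1-p)) ∑ⱼ ‖gⱼ‖_{p,∞}^p`. -/
theorem weakLp_cheby {X : Type*} [MeasurableSpace X] (μ : Measure X) {p : ℝ}
    (hp0 : 0 < p) (g : X → ℝ≥0∞) {t : ℝ} (ht : 0 < t) :
    ENNReal.ofReal t ^ p * μ {x | ENNReal.ofReal t < g x} ≤ weakLpNorm μ p g ^ p := by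
  have h1 : ENNReal.ofReal t * μ {x | ENNReal.ofReal t < g x} ^ (1 / p) ≤ weakLpNorm μ p g :=
    le_iSup₂ (f := fun (t : ℝ) (_ : 0 < t) =>
      ENNReal.ofReal t * μ {x | ENNReal.ofReal t < g x} ^ (1 / p)) t ht
  have h2 := ENNReal.rpow_le_rpow h1 hp0.le
  rwa [ENNReal.mul_rpow_of_nonneg _ _ hp0.le, ← ENNReal.rpow_mul,
    one_div_mul_cancel hp0.ne', ENNReal.rpow_one] at h2

theorem trunc_integral_le {X : Type*} [MeasurableSpace X] (μ : Measure X) {p : ℝ}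
    (hp0 : 0 < p) (hp1 : p < 1) (g : X → ℝ≥0∞) (hg : Measurable g) {u : ℝ} (hu : 0 < u) :
    ∫⁻ x, min (g x) (ENNReal.ofReal u) ∂μ ≤
      weakLpNorm μ p g ^ p * ENNReal.ofReal (u ^ (1 - p) / (1 - p)) := by
  set c := ENNReal.ofReal u with hc
  set W := weakLpNorm μ p g with hW
  have hmin_ne : ∀ x, min (g x) c ≠ ⊤ := fun x =>
    ((min_le_right _ _).trans_lt ENNReal.ofReal_lt_top).ne
  set f : X → ℝ := fun x => (min (g x) c).toReal with hf
  have hf_mble : AEMeasurable f μ := ((hg.min measurable_const).ennreal_toReal).aemeasurable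
  have hrepr : ∀ x, ENNReal.ofReal (f x) = min (g x) c := fun x =>
    ENNReal.ofReal_toReal (hmin_ne x)
  have h1 : ∫⁻ x, min (g x) c ∂μ = ∫⁻ s in Ioi (0:ℝ), μ {x | s < f x} := by
    rw [← lintegral_eq_lintegral_meas_lt μ (ae_of_all _ fun x => ENNReal.toReal_nonneg) hf_mble]
    exact lintegral_congr fun x => (hrepr x).symm
  rw [h1]
  -- bound integrand
  have h2 : ∫⁻ s in Ioi (0:ℝ), μ {x | s < f x} ≤
      ∫⁻ s in Ioi (0:ℝ), (Ioo (0:ℝ) u).indicator (fun s => W ^ p * ENNReal.ofReal s ^ (-p)) s := by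
    refine lintegral_mono_ae ?_
    filter_upwards [ae_restrict_mem measurableSet_Ioi] with s hs
    have hs0 : (0:ℝ) < s := hs
    have hset : {x | s < f x} = {x | ENNReal.ofReal s < min (g x) c} := by
      ext x
      simp only [mem_setOf_eq]
      rw [ENNReal.ofReal_lt_iff_lt_toReal hs0.le (hmin_ne x)]
    rw [hset]
    by_cases hsu : s < u
    · have hind : (Ioo (0:ℝ) u).indicator (fun s => W ^ p * ENNReal.ofReal s ^ (-p)) s
          = W ^ p * ENNReal.ofReal s ^ (-p) :=
        Set.indicator_of_mem (show s ∈ Ioo (0:ℝ) u from ⟨hs0, hsu⟩) _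
      rw [hind]
      have hsub : {x | ENNReal.ofReal s < min (g x) c} ⊆ {x | ENNReal.ofReal s < g x} := by
        intro x hx
        simp only [mem_setOf_eq] at hx ⊢
        exact lt_of_lt_of_le hx (min_le_left _ _)
      have hch := weakLp_cheby μ hp0 g hs0
      have ha0 : (ENNReal.ofReal s) ^ p ≠ 0 := by
        simp [ENNReal.rpow_eq_zero_iff, ENNReal.ofReal_eq_zero, hs0, not_le.mpr hs0,
          ENNReal.ofReal_ne_top]
      have hat : (ENNReal.ofReal s) ^ p ≠ ⊤ := by
        simp [ENNReal.rpow_eq_top_iff, ENNReal.ofReal_eq_zero, not_le.mpr hs0,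
          ENNReal.ofReal_ne_top]
      calc μ {x | ENNReal.ofReal s < min (g x) c}
          ≤ μ {x | ENNReal.ofReal s < g x} := measure_mono hsub
        _ = (ENNReal.ofReal s ^ p)⁻¹ * (ENNReal.ofReal s ^ p * μ {x | ENNReal.ofReal s < g x}) := by
            rw [← mul_assoc, ENNReal.inv_mul_cancel ha0 hat, one_mul]
        _ ≤ (ENNReal.ofReal s ^ p)⁻¹ * W ^ p := by
            exact mul_le_mul_right (weakLp_cheby μ hp0 g hs0) _
        _ = W ^ p * ENNReal.ofReal s ^ (-p) := by
            rw [ENNReal.rpow_neg, mul_comm]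
    · have : {x | ENNReal.ofReal s < min (g x) c} = ∅ := by
        ext x
        simp only [mem_setOf_eq, mem_empty_iff_false, iff_false, not_lt]
        exact (min_le_right _ _).trans (ENNReal.ofReal_le_ofReal (not_lt.1 hsu))
      rw [this, measure_empty]
      exact zero_le
  refine h2.trans ?_
  rw [lintegral_indicator measurableSet_Ioo, Measure.restrict_restrict measurableSet_Ioo,
    inter_eq_self_of_subset_left (fun s hs => hs.1)]
  rw [lintegral_const_mul _ (by fun_prop)]
  -- compute the integral
  have hkey : ∫⁻ s in Ioo (0:ℝ) u, ENNReal.ofReal s ^ (-p) =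
      ENNReal.ofReal (u ^ (1 - p) / (1 - p)) := by
    have hcongr : ∫⁻ s in Ioo (0:ℝ) u, ENNReal.ofReal s ^ (-p) =
        ∫⁻ s in Ioo (0:ℝ) u, ENNReal.ofReal (s ^ (-p)) := by
      refine setLIntegral_congr_fun measurableSet_Ioo (fun s hs => ?_)
      rw [← ENNReal.ofReal_rpow_of_pos hs.1]
    rw [hcongr]
    have hint : IntegrableOn (fun s : ℝ => s ^ (-p)) (Ioo 0 u) := by
      have := (intervalIntegral.intervalIntegrable_rpow' (a := 0) (b := u)
        (by linarith : (-1:ℝ) < -p))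
      rw [intervalIntegrable_iff_integrableOn_Ioc_of_le hu.le] at this
      exact this.mono_set Ioo_subset_Ioc_self
    rw [← ofReal_integral_eq_lintegral_ofReal hint
      (by filter_upwards [ae_restrict_mem measurableSet_Ioo] with s hs
          exact Real.rpow_nonneg hs.1.le _)]
    congr 1
    rw [← integral_Ioc_eq_integral_Ioo, ← intervalIntegral.integral_of_le hu.le,
      integral_rpow (Or.inl (by linarith : (-1:ℝ) < -p))]
    rw [Real.zero_rpow (by linarith : (-p) + 1 ≠ 0)]
    ring_nf
  rw [hkey]
theorem weakLp_tsum_le {X : Type*} [MeasurableSpace X] (μ : Measure X) (p : ℝ)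
    (hp0 : 0 < p) (hp1 : p < 1) (g : ℕ → X → ℝ≥0∞) (hg : ∀ j, Measurable (g j)) :
    weakLpNorm μ p (fun x => ∑' j, g j x) ^ p ≤
      ENNReal.ofReal (2 ^ p * (1 + 1 / (1 - p))) * ∑' j, weakLpNorm μ p (g j) ^ p := by
  have h1p : (0:ℝ) < 1 - p := by linarith
  set A : ℝ≥0∞ := ∑' j, weakLpNorm μ p (g j) ^ p with hA
  set k : ℝ≥0∞ := ENNReal.ofReal (1 / (1 - p)) with hk
  set C : ℝ≥0∞ := ENNReal.ofReal (2 ^ p * (1 + 1 / (1 - p))) with hCdef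
  have hC : C = ENNReal.ofReal 2 ^ p * (1 + k) := by
    rw [hCdef, ENNReal.ofReal_mul (by positivity), ENNReal.ofReal_rpow_of_pos two_pos,
      ENNReal.ofReal_add zero_le_one (by positivity), ENNReal.ofReal_one]
  have key : ∀ t : ℝ, 0 < t →
      ENNReal.ofReal t ^ p * μ {x | ENNReal.ofReal t < ∑' j, g j x} ≤ C * A := by
    intro t ht
    set u : ℝ := t / 2 with hu
    have hu0 : 0 < u := by positivity
    set c : ℝ≥0∞ := ENNReal.ofReal u with hc
    have hc0 : c ≠ 0 := by simp [hc, ENNReal.ofReal_eq_zero, not_le.mpr hu0]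
    have hct : c ≠ ⊤ := ENNReal.ofReal_ne_top
    set T : Set X := {x | c < ∑' j, min (g j x) c} with hT
    set U : ℕ → Set X := fun j => {x | c < g j x} with hU
    -- set inclusion
    have hincl : {x | ENNReal.ofReal t < ∑' j, g j x} ⊆ T ∪ ⋃ j, U j := by
      intro x hx
      by_contra hcon
      simp only [Set.mem_union, not_or] at hcon
      obtain ⟨hxT, hxU⟩ := hcon
      simp only [hT, mem_setOf_eq, not_lt] at hxT
      have hgle : ∀ j, g j x ≤ c := by
        intro j
        by_contra hj
        exact hxU (mem_iUnion.2 ⟨j, not_le.1 hj⟩)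
      have : (∑' j, g j x) ≤ c := by
        calc (∑' j, g j x) = ∑' j, min (g j x) c := by
              congr 1; funext j; rw [min_eq_left (hgle j)]
          _ ≤ c := hxT
      have hct' : c ≤ ENNReal.ofReal t := ENNReal.ofReal_le_ofReal (by linarith)
      exact absurd (lt_of_lt_of_le hx (this.trans hct')) (lt_irrefl _)
    have hmeasS : μ {x | ENNReal.ofReal t < ∑' j, g j x} ≤ μ T + ∑' j, μ (U j) :=
      (measure_mono hincl).trans ((measure_union_le _ _).trans
        (add_le_add le_rfl (measure_iUnion_le _)))
    -- Bound 1 : c * μ T ≤ A * (c^(1-p) * k)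
    have hFmble : Measurable fun x => ∑' j, min (g j x) c :=
      Measurable.ennreal_tsum fun j => (hg j).min measurable_const
    have hB1 : c * μ T ≤ A * (c ^ (1 - p) * k) := by
      have hsub : T ⊆ {x | c ≤ ∑' j, min (g j x) c} := by
        intro x hx
        simp only [hT, mem_setOf_eq] at hx ⊢
        exact hx.le
      calc c * μ T ≤ c * μ {x | c ≤ ∑' j, min (g j x) c} :=
            mul_le_mul_right (measure_mono hsub) _
        _ ≤ ∫⁻ x, ∑' j, min (g j x) c ∂μ := mul_meas_ge_le_lintegral₀ hFmble.aemeasurable c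
        _ = ∑' j, ∫⁻ x, min (g j x) c ∂μ :=
            lintegral_tsum fun j => ((hg j).min measurable_const).aemeasurable
        _ ≤ ∑' j, weakLpNorm μ p (g j) ^ p * ENNReal.ofReal (u ^ (1 - p) / (1 - p)) :=
            ENNReal.tsum_le_tsum fun j => trunc_integral_le μ hp0 hp1 (g j) (hg j) hu0
        _ = A * ENNReal.ofReal (u ^ (1 - p) / (1 - p)) := ENNReal.tsum_mul_right
        _ = A * (c ^ (1 - p) * k) := by
            rw [div_eq_mul_one_div, ENNReal.ofReal_mul (by positivity),
              ENNReal.ofReal_rpow_of_pos hu0]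
    have hB1' : c ^ p * μ T ≤ A * k := by
      calc c ^ p * μ T = c ^ (p - 1) * (c ^ (1:ℝ) * μ T) := by
            rw [← mul_assoc, ← ENNReal.rpow_add _ _ hc0 hct]
            norm_num
        _ ≤ c ^ (p - 1) * (A * (c ^ (1 - p) * k)) := by
            rw [ENNReal.rpow_one]
            exact mul_le_mul_right hB1 _
        _ = (c ^ (p - 1) * c ^ (1 - p)) * (A * k) := by ring
        _ = A * k := by
            rw [← ENNReal.rpow_add _ _ hc0 hct]
            norm_num
    -- Bound 2 : c ^ p * ∑' μ (U j) ≤ A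
    have hB2 : c ^ p * ∑' j, μ (U j) ≤ A := by
      rw [← ENNReal.tsum_mul_left]
      exact ENNReal.tsum_le_tsum fun j => weakLp_cheby μ hp0 (g j) hu0
    -- assemble
    have ht2 : ENNReal.ofReal t = ENNReal.ofReal 2 * c := by
      rw [hc, ← ENNReal.ofReal_mul (by norm_num : (0:ℝ) ≤ 2)]
      congr 1
      rw [hu]; ring
    calc ENNReal.ofReal t ^ p * μ {x | ENNReal.ofReal t < ∑' j, g j x}
        ≤ ENNReal.ofReal t ^ p * (μ T + ∑' j, μ (U j)) := mul_le_mul_right hmeasS _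
      _ = ENNReal.ofReal 2 ^ p * (c ^ p * μ T + c ^ p * ∑' j, μ (U j)) := by
          rw [ht2, ENNReal.mul_rpow_of_nonneg _ _ hp0.le]; ring
      _ ≤ ENNReal.ofReal 2 ^ p * (A * k + A) := by
          exact mul_le_mul_right (add_le_add hB1' hB2) _
      _ = C * A := by rw [hC]; ring
  -- conclude
  have hsup : weakLpNorm μ p (fun x => ∑' j, g j x) ≤ (C * A) ^ (1 / p) := by
    refine iSup₂_le fun t ht => ?_
    have h := ENNReal.rpow_le_rpow (key t ht) (by positivity : (0:ℝ) ≤ 1 / p)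
    rwa [ENNReal.mul_rpow_of_nonneg _ _ (by positivity), ← ENNReal.rpow_mul,
      mul_one_div_cancel hp0.ne', ENNReal.rpow_one] at h
  have := ENNReal.rpow_le_rpow hsup hp0.le
  rwa [← ENNReal.rpow_mul, one_div_mul_cancel hp0.ne', ENNReal.rpow_one] at this
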